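/- For every integer n ≥ 2 and every integer d with 0 ≤ d ≤ n, the element z^d is nonzero in VG_n. -/

import Mathlib

noncomputable section

/-- Index set for the variables `x_{ij}` with `i ≠ j` in `{1, …, n+1}` (as `Fin (n+1)`). -/
abbrev VGidx (n : ℕ) := {p : Fin (n+1) × Fin (n+1) // p.1 ≠ p.2}

/-- The defining ideal of the Varchenko–Gel'fand ring of the braid arrangement `A_n`. -/
def VGrel (n : ℕ) : Ideal (MvPolynomial (VGidx n) ℚ) :=
  Ideal.span
    ({q | ∃ v : VGidx n, q = MvPolynomial.X v ^ 2} ∪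
     {q | ∃ (i j : Fin (n+1)) (hij : i ≠ j),
        q = MvPolynomial.X (⟨(i,j),hij⟩ : VGidx n) + MvPolynomial.X ⟨(j,i),hij.symm⟩} ∪
     {q | ∃ (i j k : Fin (n+1)) (hij : i ≠ j) (hjk : j ≠ k) (hki : k ≠ i),
        q = MvPolynomial.X (⟨(i,j),hij⟩ : VGidx n) * MvPolynomial.X ⟨(j,k),hjk⟩
          + MvPolynomial.X (⟨(j,k),hjk⟩ : VGidx n) * MvPolynomial.X ⟨(k,i),hki⟩
          + MvPolynomial.X (⟨(k,i),hki⟩ : VGidx n) * MvPolynomial.X ⟨(i,j),hij⟩})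

/-- The Varchenko–Gel'fand ring `VG_n`. -/
abbrev VG (n : ℕ) := MvPolynomial (VGidx n) ℚ ⧸ VGrel n

/-- The action of a permutation of `{1, …, n+1}` on the variable indices. -/
def VGpermIdx (n : ℕ) (σ : Equiv.Perm (Fin (n+1))) : VGidx n → VGidx n :=
  fun v => ⟨(σ v.1.1, σ v.1.2), fun h => v.2 (σ.injective h)⟩

lemma VGrel_stable (n : ℕ) (σ : Equiv.Perm (Fin (n+1))) :
    ∀ a ∈ VGrel n, (MvPolynomial.rename (VGpermIdx n σ)) a ∈ VGrel n := by
  intro a ha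
  have hle : (VGrel n).map (MvPolynomial.rename (VGpermIdx n σ)).toRingHom ≤ VGrel n := by
    rw [VGrel, Ideal.map_span, Ideal.span_le]
    rintro q ⟨p, hp, rfl⟩
    apply Ideal.subset_span
    simp only [Set.mem_union, Set.mem_setOf_eq] at hp ⊢
    rcases hp with ((⟨v, rfl⟩ | ⟨i, j, hij, rfl⟩) | ⟨i, j, k, hij, hjk, hki, rfl⟩)
    · refine Or.inl (Or.inl ⟨VGpermIdx n σ v, ?_⟩)
      simp [map_pow, MvPolynomial.rename_X]
    · refine Or.inl (Or.inr ⟨σ i, σ j, fun h => hij (σ.injective h), ?_⟩)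
      simp [map_add, MvPolynomial.rename_X, VGpermIdx]
    · refine Or.inr ⟨σ i, σ j, σ k, fun h => hij (σ.injective h), fun h => hjk (σ.injective h),
        fun h => hki (σ.injective h), ?_⟩
      simp [map_add, map_mul, MvPolynomial.rename_X, VGpermIdx]
  exact hle (Ideal.mem_map_of_mem _ ha)

/-- The algebra automorphism of `VG_n` induced by a permutation of `{1, …, n+1}`. -/
def VGperm (n : ℕ) (σ : Equiv.Perm (Fin (n+1))) : VG n →ₐ[ℚ] VG n :=
  Ideal.Quotient.liftₐ (VGrel n)
    ((Ideal.Quotient.mkₐ ℚ (VGrel n)).comp (MvPolynomial.rename (VGpermIdx n σ)))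
    (fun a ha => by
      simp only [AlgHom.comp_apply, Ideal.Quotient.mkₐ_eq_mk]
      exact Ideal.Quotient.eq_zero_iff_mem.mpr (VGrel_stable n σ a ha))

/-- The subalgebra of `S_n`-invariants of `VG_n`, where `S_n` is the subgroup of permutations
of `{1, …, n+1}` fixing `n+1`. -/
def VGinv (n : ℕ) : Subalgebra ℚ (VG n) where
  carrier := {x | ∀ σ : Equiv.Perm (Fin (n+1)), σ (Fin.last n) = Fin.last n → VGperm n σ x = x}
  mul_mem' := fun hx hy σ hσ => by rw [map_mul, hx σ hσ, hy σ hσ]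
  add_mem' := fun hx hy σ hσ => by rw [map_add, hx σ hσ, hy σ hσ]
  one_mem' := fun σ _ => map_one _
  zero_mem' := fun σ _ => map_zero _
  algebraMap_mem' := fun r σ hσ => AlgHom.commutes _ r

/-- The subalgebra of `S_{n+1}`-invariants of `VG_n`. -/
def VGinvFull (n : ℕ) : Subalgebra ℚ (VG n) where
  carrier := {x | ∀ σ : Equiv.Perm (Fin (n+1)), VGperm n σ x = x}
  mul_mem' := fun hx hy σ => by rw [map_mul, hx σ, hy σ]
  add_mem' := fun hx hy σ => by rw [map_add, hx σ, hy σ]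
  one_mem' := fun σ => map_one _
  zero_mem' := fun σ => map_zero _
  algebraMap_mem' := fun r σ => AlgHom.commutes _ r

/-- The element `z = x_{1,n+1} + x_{2,n+1} + ⋯ + x_{n,n+1}` of `VG_n`. -/
def zVG (n : ℕ) : VG n :=
  Ideal.Quotient.mk (VGrel n)
    (∑ i : Fin n, MvPolynomial.X ⟨(i.castSucc, Fin.last n), (Fin.castSucc_lt_last i).ne⟩)


section Aux

open MvPolynomial



/-- Squarefree multidegree attached to a finite set. -/
lemma sqfree_apply {σ : Type*} [DecidableEq σ] (t : Finset σ) (i : σ) :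
    ((∑ j ∈ t, Finsupp.single j 1 : σ →₀ ℕ)) i = if i ∈ t then 1 else 0 := by
  rw [Finset.sum_apply']
  simp [Finsupp.single_apply, Finset.sum_ite_eq' t i (fun _ => 1)]

lemma sqfree_sub {σ : Type*} [DecidableEq σ] (t : Finset σ) (i : σ) (hi : i ∈ t) :
    (∑ j ∈ t, Finsupp.single j 1 : σ →₀ ℕ) - Finsupp.single i 1
      = ∑ j ∈ t.erase i, Finsupp.single j 1 := by
  ext a
  rw [Finsupp.tsub_apply, sqfree_apply, sqfree_apply, Finsupp.single_apply]
  by_cases h : a = i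
  · subst h; simp [hi, Finset.mem_erase]
  · by_cases h2 : a ∈ t <;> simp [h, h2, Finset.mem_erase, Ne.symm h]

lemma coeff_sum_pow {σ : Type*} [DecidableEq σ] (d : ℕ) (t s : Finset σ)
    (hts : t ⊆ s) (htc : t.card = d) :
    MvPolynomial.coeff (∑ j ∈ t, Finsupp.single j 1)
      ((∑ i ∈ s, (MvPolynomial.X i : MvPolynomial σ ℚ)) ^ d) = (d.factorial : ℚ) := by
  induction d generalizing t with
  | zero =>
    rw [Finset.card_eq_zero.mp htc]
    simp
  | succ d ih =>
    rw [pow_succ', Finset.sum_mul, coeff_sum]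
    have hsupp : (∑ j ∈ t, Finsupp.single j 1 : σ →₀ ℕ).support = t := by
      ext a
      simp [Finsupp.mem_support_iff, sqfree_apply]
    calc (∑ i ∈ s, coeff (∑ j ∈ t, Finsupp.single j 1)
          ((X i : MvPolynomial σ ℚ) * (∑ i ∈ s, X i) ^ d))
        = ∑ i ∈ s, (if i ∈ t then (d.factorial : ℚ) else 0) := by
          refine Finset.sum_congr rfl fun i _ => ?_
          rw [coeff_X_mul', hsupp]
          by_cases hi : i ∈ t
          · rw [if_pos hi, if_pos hi, sqfree_sub t i hi]
            exact ih _ ((Finset.erase_subset _ _).trans hts)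
              (by rw [Finset.card_erase_of_mem hi, htc]; rfl)
          · rw [if_neg hi, if_neg hi]
      _ = (d + 1).factorial := by
          rw [Finset.sum_ite_mem, Finset.inter_eq_right.mpr hts, Finset.sum_const, htc,
            Nat.factorial_succ]
          push_cast
          ring

/-- The ideal of squares. -/
noncomputable def Jsq (n : ℕ) : Ideal (MvPolynomial (Fin (n+1)) ℚ) :=
  Ideal.span {q | ∃ i : Fin (n+1), q = MvPolynomial.X i ^ 2}

lemma coeff_Jsq_zero (n : ℕ) (m : Fin (n+1) →₀ ℕ) (hm : ∀ i, m i ≤ 1)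
    {p : MvPolynomial (Fin (n+1)) ℚ} (hp : p ∈ Jsq n) : coeff m p = 0 := by
  have key : ∀ a : MvPolynomial (Fin (n+1)) ℚ, coeff m (a * p) = 0 := by
    refine Submodule.span_induction (p := fun x _ => ∀ a, coeff m (a * x) = 0)
      ?_ ?_ ?_ ?_ hp
    · rintro x ⟨i, rfl⟩ a
      rw [coeff_mul]
      refine Finset.sum_eq_zero ?_
      rintro ⟨u, v⟩ huv
      rw [coeff_X_pow]
      by_cases h : Finsupp.single i 2 = v
      · exfalso
        have huv' : u + v = m := Finset.HasAntidiagonal.mem_antidiagonal.mp huv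
        have : m i = u i + v i := by rw [← huv']; rfl
        have hv : v i = 2 := by rw [← h]; simp
        have := hm i
        omega
      · simp [h]
    · intro a; simp
    · intro x y _ _ hx hy a
      rw [mul_add, coeff_add, hx, hy, add_zero]
    · intro r x _ hx a
      rw [smul_eq_mul, ← mul_assoc]
      exact hx (a * r)
  simpa using key 1


/-- Helper: membership of `-(X a)^2` in the squares ideal. -/
lemma negsq_mem (n : ℕ) (a : Fin (n+1)) (p : MvPolynomial (Fin (n+1)) ℚ)
    (h : p = -(MvPolynomial.X a ^ 2)) : p ∈ Jsq n := by
  rw [h]; exact neg_mem (Ideal.subset_span ⟨a, rfl⟩)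

/-- The algebra map sending `x_{ij}` to `X i` if `i < j` and `-X j` otherwise. -/
noncomputable def VGtoSq (n : ℕ) : MvPolynomial (VGidx n) ℚ →ₐ[ℚ] MvPolynomial (Fin (n+1)) ℚ :=
  MvPolynomial.aeval (fun v =>
    if v.1.1 < v.1.2 then MvPolynomial.X v.1.1 else - MvPolynomial.X v.1.2)

lemma VGtoSq_rel (n : ℕ) : ∀ a ∈ VGrel n, VGtoSq n a ∈ Jsq n := by
  intro a ha
  have hle : (VGrel n).map (VGtoSq n).toRingHom ≤ Jsq n := by
    rw [VGrel, Ideal.map_span, Ideal.span_le]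
    rintro q ⟨p, hp, rfl⟩
    simp only [Set.mem_union, Set.mem_setOf_eq] at hp
    rcases hp with ((⟨v, rfl⟩ | ⟨i, j, hij, rfl⟩) | ⟨i, j, k, hij, hjk, hki, rfl⟩)
    · simp only [AlgHom.toRingHom_eq_coe, RingHom.coe_coe, map_pow, VGtoSq, aeval_X]
      by_cases h : v.1.1 < v.1.2
      · rw [if_pos h]; exact Ideal.subset_span ⟨_, rfl⟩
      · rw [if_neg h, neg_sq]; exact Ideal.subset_span ⟨_, rfl⟩
    · simp only [AlgHom.toRingHom_eq_coe, RingHom.coe_coe, map_add, VGtoSq, aeval_X]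
      rcases lt_or_gt_of_ne hij with h | h
      · rw [if_pos h, if_neg (not_lt.mpr h.le)]
        simp
      · rw [if_neg (not_lt.mpr h.le), if_pos h]
        simp
    · simp only [AlgHom.toRingHom_eq_coe, RingHom.coe_coe, map_add, map_mul, VGtoSq, aeval_X]
      rcases lt_or_gt_of_ne hij with h1 | h1 <;>
        rcases lt_or_gt_of_ne hjk with h2 | h2 <;>
          rcases lt_or_gt_of_ne hki with h3 | h3
      · exact absurd (h1.trans h2) (asymm h3)
      · rw [if_pos h1, if_pos h2, if_neg (not_lt.mpr h3.le)]
        exact negsq_mem n i _ (by ring)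
      · rw [if_pos h1, if_neg (not_lt.mpr h2.le), if_pos h3]
        exact negsq_mem n k _ (by ring)
      · rw [if_pos h1, if_neg (not_lt.mpr h2.le), if_neg (not_lt.mpr h3.le)]
        exact negsq_mem n i _ (by ring)
      · rw [if_neg (not_lt.mpr h1.le), if_pos h2, if_pos h3]
        exact negsq_mem n j _ (by ring)
      · rw [if_neg (not_lt.mpr h1.le), if_pos h2, if_neg (not_lt.mpr h3.le)]
        exact negsq_mem n j _ (by ring)
      · rw [if_neg (not_lt.mpr h1.le), if_neg (not_lt.mpr h2.le), if_pos h3]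
        exact negsq_mem n k _ (by ring)
      · exact absurd (h2.trans h1) (asymm h3)
  exact hle (Ideal.mem_map_of_mem _ ha)

/-- The induced map `VG n → MvPolynomial (Fin (n+1)) ℚ ⧸ Jsq n`. -/
noncomputable def VGpsi (n : ℕ) : VG n →ₐ[ℚ] (MvPolynomial (Fin (n+1)) ℚ ⧸ Jsq n) :=
  Ideal.Quotient.liftₐ (VGrel n)
    ((Ideal.Quotient.mkₐ ℚ (Jsq n)).comp (VGtoSq n))
    (fun a ha => by
      simp only [AlgHom.comp_apply, Ideal.Quotient.mkₐ_eq_mk]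
      exact Ideal.Quotient.eq_zero_iff_mem.mpr (VGtoSq_rel n a ha))

end Aux

/-- For every integer `n ≥ 2` and every `0 ≤ d ≤ n`, `z^d ≠ 0` in `VG_n`. -/
theorem zVG_pow_ne_zero (n : ℕ) (hn : 2 ≤ n) (d : ℕ) (hd : d ≤ n) : zVG n ^ d ≠ 0 := by
  intro h
  classical
  -- Push the hypothesis through `VGpsi`.
  have hpsi : VGpsi n (zVG n) =
      Ideal.Quotient.mk (Jsq n) (∑ i : Fin n, MvPolynomial.X i.castSucc) := by
    have hval : VGtoSq n (∑ i : Fin n,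
        MvPolynomial.X ⟨(i.castSucc, Fin.last n), (Fin.castSucc_lt_last i).ne⟩)
        = ∑ i : Fin n, MvPolynomial.X i.castSucc := by
      rw [map_sum]
      refine Finset.sum_congr rfl fun i _ => ?_
      rw [VGtoSq, MvPolynomial.aeval_X]
      exact if_pos (Fin.castSucc_lt_last i)
    rw [zVG, VGpsi, Ideal.Quotient.liftₐ_apply]
    erw [Ideal.Quotient.lift_mk]
    simp only [AlgHom.toRingHom_eq_coe, RingHom.coe_coe, AlgHom.comp_apply,
      Ideal.Quotient.mkₐ_eq_mk, hval]
  set s : Finset (Fin (n+1)) := Finset.image Fin.castSucc Finset.univ with hs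
  have hsum : (∑ i : Fin n, MvPolynomial.X i.castSucc : MvPolynomial (Fin (n+1)) ℚ)
      = ∑ i ∈ s, MvPolynomial.X i := by
    rw [hs, Finset.sum_image (fun a _ b _ hab => Fin.castSucc_injective n hab)]
  have hmem : ((∑ i ∈ s, MvPolynomial.X i : MvPolynomial (Fin (n+1)) ℚ)) ^ d ∈ Jsq n := by
    rw [← hsum]
    rw [← Ideal.Quotient.eq_zero_iff_mem]
    have : VGpsi n (zVG n ^ d) = 0 := by rw [h, map_zero]
    rw [map_pow, hpsi, ← map_pow] at this
    exact this
  -- the subset `t` of size `d`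
  set t : Finset (Fin (n+1)) :=
    Finset.image (fun i : Fin d => Fin.castSucc (⟨i.1, lt_of_lt_of_le i.2 hd⟩ : Fin n))
      Finset.univ with ht
  have htinj : Function.Injective
      (fun i : Fin d => Fin.castSucc (⟨i.1, lt_of_lt_of_le i.2 hd⟩ : Fin n)) := by
    intro a b hab
    have h' : (a : ℕ) = b := by
      have := congrArg Fin.val hab
      simpa using this
    exact Fin.val_injective h' 
  have hts : t ⊆ s := by
    rw [ht, hs]
    intro x hx
    simp only [Finset.mem_image, Finset.mem_univ, true_and] at hx ⊢
    obtain ⟨i, rfl⟩ := hx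
    exact ⟨_, rfl⟩
  have htc : t.card = d := by
    rw [ht, Finset.card_image_of_injective _ htinj, Finset.card_univ, Fintype.card_fin]
  have h1 : MvPolynomial.coeff (∑ j ∈ t, Finsupp.single j 1)
      ((∑ i ∈ s, (MvPolynomial.X i : MvPolynomial (Fin (n+1)) ℚ)) ^ d) = (d.factorial : ℚ) :=
    coeff_sum_pow d t s hts htc
  have h2 : MvPolynomial.coeff (∑ j ∈ t, Finsupp.single j 1)
      ((∑ i ∈ s, (MvPolynomial.X i : MvPolynomial (Fin (n+1)) ℚ)) ^ d) = 0 := by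
    refine coeff_Jsq_zero n _ (fun i => ?_) hmem
    rw [sqfree_apply]
    split <;> omega
  rw [h1] at h2
  exact (Nat.cast_ne_zero.mpr d.factorial_ne_zero) h2


end
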